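/- The Θ-separation of the symmetric space of PGL_d(ℝ) is 1/(d−1) (the computation behind the paper's Proposition 'separation is nonnegative' and its example ε(Y_d) = 1/(d−1)): Let d ≥ 2 be an integer and for 1 ≤ k ≤ d−1 define the fundamental coweight ω_k ∈ ℝ^d (with the standard inner product) by (ω_k)_l = 1 − k/d for 1 ≤ l ≤ k and (ω_k)_l = −k/d for k < l ≤ d. Then: (a) for 1 ≤ i ≤ j ≤ d−1, ⟨ω_i, ω_j⟩ = i·(d−j)/d and ‖ω_k‖² = k·(d−k)/d; (b) for all 1 ≤ i, j ≤ d−1, (d−1)·⟨ω_i, ω_j⟩ ≥ ‖ω_i‖·‖ω_j‖; and (c) equality holds in (b) for i = 1, j = d−1. Equivalently, the minimum over all pairs i, j of the cosine of the angle between ω_i and ω_j equals 1/(d−1). -/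

import Mathlib

/-- The fundamental coweight `ω_k` of the root system `A_{d−1}`, realized in
`ℝ^d`: its `l`-th coordinate (1-indexed: `l ≤ k`, i.e. 0-indexed `l < k`) is
`1 − k/d`, and the remaining coordinates are `−k/d`. -/
noncomputable def omegaCoweight (d k : ℕ) : EuclideanSpace ℝ (Fin d) :=
  WithLp.toLp 2 fun l => if (l : ℕ) < k then 1 - (k : ℝ) / d else -((k : ℝ) / d)

open Finset in
lemma inner_omega (d i j : ℕ) (hd : 0 < d) (hij : i ≤ j) (hj : j ≤ d) :
    (inner ℝ (omegaCoweight d i) (omegaCoweight d j) : ℝ) = (i : ℝ) * ((d:ℝ) - j) / d := by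
  have hdr : (d:ℝ) ≠ 0 := by positivity
  rw [PiLp.inner_apply]
  simp only [omegaCoweight, PiLp.toLp_apply, RCLike.inner_apply', conj_trivial]
  rw [Fin.sum_univ_eq_sum_range (fun l =>
    (if l < i then 1 - (i:ℝ)/d else -((i:ℝ)/d)) * (if l < j then 1 - (j:ℝ)/d else -((j:ℝ)/d)))]
  rw [← Nat.Ico_zero_eq_range,
    ← Finset.sum_Ico_consecutive _ (Nat.zero_le j) hj,
    ← Finset.sum_Ico_consecutive _ (Nat.zero_le i) hij]
  have h1 : ∑ l ∈ Ico 0 i, ((if l < i then 1 - (i:ℝ)/d else -((i:ℝ)/d)) *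
      (if l < j then 1 - (j:ℝ)/d else -((j:ℝ)/d))) = i * ((1 - (i:ℝ)/d) * (1 - (j:ℝ)/d)) := by
    have e : ∀ l ∈ Ico 0 i, ((if l < i then 1 - (i:ℝ)/d else -((i:ℝ)/d)) *
        (if l < j then 1 - (j:ℝ)/d else -((j:ℝ)/d))) = (1 - (i:ℝ)/d) * (1 - (j:ℝ)/d) := by
      intro l hl
      simp only [mem_Ico] at hl
      rw [if_pos hl.2, if_pos (lt_of_lt_of_le hl.2 hij)]
    rw [Finset.sum_congr rfl e, Finset.sum_const, Nat.card_Ico, nsmul_eq_mul]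
    norm_num
  have h2 : ∑ l ∈ Ico i j, ((if l < i then 1 - (i:ℝ)/d else -((i:ℝ)/d)) *
      (if l < j then 1 - (j:ℝ)/d else -((j:ℝ)/d))) = ((j:ℝ) - i) * (-((i:ℝ)/d) * (1 - (j:ℝ)/d)) := by
    have e : ∀ l ∈ Ico i j, ((if l < i then 1 - (i:ℝ)/d else -((i:ℝ)/d)) *
        (if l < j then 1 - (j:ℝ)/d else -((j:ℝ)/d))) = -((i:ℝ)/d) * (1 - (j:ℝ)/d) := by
      intro l hl
      simp only [mem_Ico] at hl
      rw [if_neg (not_lt.2 hl.1), if_pos hl.2]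
    rw [Finset.sum_congr rfl e, Finset.sum_const, Nat.card_Ico, nsmul_eq_mul,
      Nat.cast_sub hij]
  have h3 : ∑ l ∈ Ico j d, ((if l < i then 1 - (i:ℝ)/d else -((i:ℝ)/d)) *
      (if l < j then 1 - (j:ℝ)/d else -((j:ℝ)/d))) = ((d:ℝ) - j) * (-((i:ℝ)/d) * -((j:ℝ)/d)) := by
    have e : ∀ l ∈ Ico j d, ((if l < i then 1 - (i:ℝ)/d else -((i:ℝ)/d)) *
        (if l < j then 1 - (j:ℝ)/d else -((j:ℝ)/d))) = -((i:ℝ)/d) * -((j:ℝ)/d) := by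
      intro l hl
      simp only [mem_Ico] at hl
      rw [if_neg (not_lt.2 (le_trans hij hl.1)), if_neg (not_lt.2 hl.1)]
    rw [Finset.sum_congr rfl e, Finset.sum_const, Nat.card_Ico, nsmul_eq_mul,
      Nat.cast_sub hj]
  rw [h1, h2, h3]
  field_simp
  ring

lemma norm_sq_omega (d k : ℕ) (hd : 0 < d) (hk : k ≤ d) :
    ‖omegaCoweight d k‖ ^ 2 = (k : ℝ) * ((d:ℝ) - k) / d := by
  rw [← real_inner_self_eq_norm_sq, inner_omega d k k hd le_rfl hk]

lemma sep_key (d i j : ℕ) (hd : 2 ≤ d) (hi : 1 ≤ i) (hij : i ≤ j) (hj : j ≤ d - 1) :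
    ‖omegaCoweight d i‖ * ‖omegaCoweight d j‖ ≤
      ((d : ℝ) - 1) * (inner ℝ (omegaCoweight d i) (omegaCoweight d j) : ℝ) := by
  have hd0 : 0 < d := by omega
  have hdr : (0:ℝ) < d := by exact_mod_cast hd0
  have hir : (1:ℝ) ≤ i := by exact_mod_cast hi
  have hijr : (i:ℝ) ≤ j := by exact_mod_cast hij
  have hjr : (j:ℝ) ≤ (d:ℝ) - 1 := by
    have h : (j:ℝ) ≤ ((d-1:ℕ):ℝ) := by exact_mod_cast hj
    rwa [Nat.cast_sub (by omega), Nat.cast_one] at h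
  have hni := norm_sq_omega d i hd0 (by omega)
  have hnj := norm_sq_omega d j hd0 (by omega)
  have hinner := inner_omega d i j hd0 hij (by omega)
  set a := ‖omegaCoweight d i‖
  set b := ‖omegaCoweight d j‖
  set R := ((d : ℝ) - 1) * (inner ℝ (omegaCoweight d i) (omegaCoweight d j) : ℝ) with hR
  have hdj1 : (1:ℝ) ≤ (d:ℝ) - j := by linarith
  have hd1 : (0:ℝ) ≤ (d:ℝ) - 1 := by linarith
  have hRnn : 0 ≤ R := by
    rw [hR, hinner]
    exact mul_nonneg hd1 (div_nonneg (mul_nonneg (by positivity) (by linarith)) hdr.le)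
  have hsnn : 0 ≤ a * b := mul_nonneg (norm_nonneg _) (norm_nonneg _)
  have A : (d:ℝ) - i ≤ ((d:ℝ)-1) * i := by nlinarith
  have B : (j:ℝ) ≤ ((d:ℝ)-1) * ((d:ℝ)-j) := by nlinarith
  have hs2 : (a * b) ^ 2 ≤ R ^ 2 := by
    have C : ((d:ℝ)-i)*(j:ℝ) ≤ (((d:ℝ)-1)*i)*(((d:ℝ)-1)*((d:ℝ)-j)) :=
      mul_le_mul A B (by positivity) (mul_nonneg hd1 (by positivity))
    have D := mul_le_mul_of_nonneg_left C
      (mul_nonneg (by positivity : (0:ℝ) ≤ (i:ℝ)) (by linarith : (0:ℝ) ≤ (d:ℝ)-j))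
    rw [mul_pow, hni, hnj, hR, hinner]
    have h2 : (((d:ℝ) - 1) * ((i:ℝ) * ((d:ℝ) - j) / d)) ^ 2
        = (((d:ℝ)-1)*(i:ℝ)*((d:ℝ)-j))^2/((d:ℝ)*(d:ℝ)) := by
      field_simp
    rw [h2, div_mul_div_comm, div_le_div_iff₀ (by positivity) (by positivity)]
    nlinarith [D, mul_pos hdr hdr]
  calc a * b = Real.sqrt ((a*b)^2) := (Real.sqrt_sq hsnn).symm
    _ ≤ Real.sqrt (R^2) := Real.sqrt_le_sqrt hs2
    _ = R := Real.sqrt_sq hRnn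

/-- **The Π-separation of the symmetric space of `PGL_d(ℝ)` is `1/(d−1)`.**
(a) For `1 ≤ i ≤ j ≤ d−1`, `⟨ω_i, ω_j⟩ = i(d−j)/d` and `‖ω_k‖² = k(d−k)/d`;
(b) for all `1 ≤ i, j ≤ d−1`, `(d−1)·⟨ω_i, ω_j⟩ ≥ ‖ω_i‖·‖ω_j‖`;
(c) equality holds in (b) for `i = 1`, `j = d−1`. -/
theorem pgl_separation (d : ℕ) (hd : 2 ≤ d) :
    (∀ i j : ℕ, 1 ≤ i → i ≤ j → j ≤ d - 1 →
      (inner ℝ (omegaCoweight d i) (omegaCoweight d j) : ℝ) =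
        (i : ℝ) * ((d : ℝ) - (j : ℝ)) / d) ∧
    (∀ k : ℕ, 1 ≤ k → k ≤ d - 1 →
      ‖omegaCoweight d k‖ ^ 2 = (k : ℝ) * ((d : ℝ) - (k : ℝ)) / d) ∧
    (∀ i j : ℕ, 1 ≤ i → i ≤ d - 1 → 1 ≤ j → j ≤ d - 1 →
      ‖omegaCoweight d i‖ * ‖omegaCoweight d j‖ ≤
        ((d : ℝ) - 1) * (inner ℝ (omegaCoweight d i) (omegaCoweight d j) : ℝ)) ∧
    (((d : ℝ) - 1) * (inner ℝ (omegaCoweight d 1) (omegaCoweight d (d - 1)) : ℝ) =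
      ‖omegaCoweight d 1‖ * ‖omegaCoweight d (d - 1)‖) := by
  have hd0 : 0 < d := by omega
  have hdr : (0:ℝ) < d := by exact_mod_cast hd0
  have hcast : ((d - 1 : ℕ) : ℝ) = (d : ℝ) - 1 := by
    rw [Nat.cast_sub (by omega), Nat.cast_one]
  refine ⟨fun i j hi hij hj => inner_omega d i j hd0 hij (by omega),
    fun k hk1 hk2 => norm_sq_omega d k hd0 (by omega), ?_, ?_⟩
  · intro i j hi hi' hj hj'
    rcases le_total i j with h | h
    · exact sep_key d i j hd hi h hj'
    · rw [real_inner_comm, mul_comm ‖omegaCoweight d i‖]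
      exact sep_key d j i hd hj h hi'
  · have hinner := inner_omega d 1 (d-1) hd0 (by omega) (by omega)
    have hn1 := norm_sq_omega d 1 hd0 (by omega)
    have hn2 := norm_sq_omega d (d-1) hd0 (by omega)
    rw [hcast] at hinner hn2
    have hR : ((d : ℝ) - 1) * (inner ℝ (omegaCoweight d 1) (omegaCoweight d (d - 1)) : ℝ)
        = ((d:ℝ)-1)/d := by rw [hinner]; field_simp; push_cast; ring
    have hRnn : (0:ℝ) ≤ ((d:ℝ)-1)/d := by
      apply div_nonneg _ hdr.le; linarith [hdr]; 
    have hprod : (‖omegaCoweight d 1‖ * ‖omegaCoweight d (d-1)‖)^2 = (((d:ℝ)-1)/d)^2 := by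
      rw [mul_pow, hn1, hn2]
      field_simp
      ring
    rw [hR]
    have hsnn : 0 ≤ ‖omegaCoweight d 1‖ * ‖omegaCoweight d (d-1)‖ :=
      mul_nonneg (norm_nonneg _) (norm_nonneg _)
    calc ((d:ℝ)-1)/d = Real.sqrt ((((d:ℝ)-1)/d)^2) := (Real.sqrt_sq hRnn).symm
      _ = Real.sqrt ((‖omegaCoweight d 1‖ * ‖omegaCoweight d (d-1)‖)^2) := by rw [hprod]
      _ = ‖omegaCoweight d 1‖ * ‖omegaCoweight d (d-1)‖ := Real.sqrt_sq hsnn
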